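/- Let 𝒜_{(q₀,r)} = (Q,{a,b},δ) be an n-state synchronizing almost permutation automaton with sink state q₀ and pre-sink state r, and let k be a positive multiple of the order of the letter a. Then every reset word of the tail extension 𝒜_{(q₀,r)}(k,r) has length at least rt(𝒜_{(q₀,r)}) + n·k; that is, rt(𝒜_{(q₀,r)}(k,r)) ≥ rt(𝒜_{(q₀,r)}) + n·k. -/
import Mathlib


/-- The two letters of a binary alphabet. -/
inductive Letter where
  | a : Letter
  | b : Letter
deriving DecidableEq

/-- Extension of a transition function `δ : Q → Letter → Q` to words
(lists of letters), acting on the left: `δ(q, uv) = δ(δ(q, u), v)`. -/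
def deltaStar {Q : Type*} (δ : Q → Letter → Q) (q : Q) (w : List Letter) : Q :=
  w.foldl δ q

/-- `w` is a reset word for the automaton with transition function `δ`. -/
def IsResetWord {Q : Type*} (δ : Q → Letter → Q) (w : List Letter) : Prop :=
  ∀ p q : Q, deltaStar δ p w = deltaStar δ q w

/-- The reset threshold: the minimum length of a reset word. -/
noncomputable def resetThreshold {Q : Type*} (δ : Q → Letter → Q) : ℕ :=
  sInf {l : ℕ | ∃ w : List Letter, IsResetWord δ w ∧ w.length = l}

/-- The tail extension `𝒜(k, r)` of a binary DFA `𝒜 = (Q, {a,b}, δ)` with sink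
state `q0`: the state set is `Q ⊕ Fin k` with `Sum.inr i` playing the role of
the tail state `tᵢ`, and
`δ'(s,a) = δ(s,a)` for `s ∈ Q \ {q0}`, `δ'(q0,a) = t_{k-1}`, `δ'(t0,a) = t0`,
`δ'(tᵢ,a) = t_{i-1}` for `1 ≤ i ≤ k-1`; `δ'(s,b) = δ(s,b)` for `s ∈ Q \ {q0}`,
`δ'(t0,b) = t0`, and `δ'(s,b) = r` for `s ∈ {q0, t1, …, t_{k-1}}`. -/
def tailExt {Q : Type*} [DecidableEq Q] (δ : Q → Letter → Q) (q0 r : Q)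
    (k : ℕ) (hk : 0 < k) : Q ⊕ Fin k → Letter → Q ⊕ Fin k
  | Sum.inl s, Letter.a =>
      if s = q0 then Sum.inr ⟨k - 1, Nat.sub_lt hk Nat.one_pos⟩
      else Sum.inl (δ s Letter.a)
  | Sum.inl s, Letter.b =>
      if s = q0 then Sum.inl r else Sum.inl (δ s Letter.b)
  | Sum.inr i, Letter.a =>
      if (i : ℕ) = 0 then Sum.inr i
      else Sum.inr ⟨(i : ℕ) - 1, Nat.lt_of_le_of_lt (Nat.sub_le _ _) i.isLt⟩
  | Sum.inr i, Letter.b =>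
      if (i : ℕ) = 0 then Sum.inr i else Sum.inl r

namespace Vorel

variable {Q : Type*}

theorem dS_nil (δ : Q → Letter → Q) (q : Q) : deltaStar δ q [] = q := rfl

theorem dS_cons (δ : Q → Letter → Q) (q : Q) (ℓ : Letter) (w : List Letter) :
    deltaStar δ q (ℓ :: w) = deltaStar δ (δ q ℓ) w := rfl

theorem dS_append (δ : Q → Letter → Q) (q : Q) (u v : List Letter) :
    deltaStar δ q (u ++ v) = deltaStar δ (deltaStar δ q u) v := List.foldl_append ..

theorem dS_sink (δ : Q → Letter → Q) {q0 : Q} (h : ∀ ℓ, δ q0 ℓ = q0) (w : List Letter) :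
    deltaStar δ q0 w = q0 := by
  induction w with
  | nil => rfl
  | cons ℓ w ih => rw [dS_cons, h]; exact ih

theorem dS_inj (δ : Q → Letter → Q) (h : ∀ ℓ, Function.Injective (fun q => δ q ℓ))
    (w : List Letter) : Function.Injective (fun q => deltaStar δ q w) := by
  induction w with
  | nil => exact fun a b hab => hab
  | cons ℓ w ih =>
      intro x y hxy
      exact h ℓ (ih hxy)

theorem dS_replicate_fixed (δ : Q → Letter → Q) {q : Q} {ℓ : Letter} (h : δ q ℓ = q)
    (j : ℕ) : deltaStar δ q (List.replicate j ℓ) = q := by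
  induction j with
  | zero => rfl
  | succ j ih => rw [List.replicate_succ, dS_cons, h]; exact ih

/-- `a^k` acts as the identity if `k` is a multiple of the order. -/
theorem dS_replicate_mul (δ : Q → Letter → Q) {ord : ℕ}
    (hordid : ∀ q : Q, deltaStar δ q (List.replicate ord Letter.a) = q)
    (m : ℕ) : ∀ q : Q, deltaStar δ q (List.replicate (m * ord) Letter.a) = q := by
  induction m with
  | zero => intro q; simp [deltaStar]
  | succ m ih =>
      intro q
      have : (m + 1) * ord = ord + m * ord := by ring
      rw [this, List.replicate_add, dS_append, hordid]
      exact ih q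


section Main

variable [DecidableEq Q]
variable (δ : Q → Letter → Q) (q0 r : Q)

/-- The permutation automaton `𝒝`: like `δ` except `b` sends `q0` to `r`. -/
def dtil : Q → Letter → Q
  | q, Letter.a => δ q Letter.a
  | q, Letter.b => if q = q0 then r else δ q Letter.b

variable {δ q0 r}

theorem dtil_a (q : Q) : dtil δ q0 r q Letter.a = δ q Letter.a := rfl
theorem dtil_b (q : Q) : dtil δ q0 r q Letter.b = if q = q0 then r else δ q Letter.b := rfl

theorem dtil_a_q0 (hsink : ∀ ℓ, δ q0 ℓ = q0) : dtil δ q0 r q0 Letter.a = q0 := hsink Letter.a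

theorem dtil_inj
    (hsink : ∀ ℓ : Letter, δ q0 ℓ = q0)
    (hrne : r ≠ q0) (hrb : δ r Letter.b = q0)
    (hruniq : ∀ s : Q, s ≠ q0 → δ s Letter.b = q0 → s = r)
    (hb : Set.BijOn (fun s => δ s Letter.b) {r}ᶜ {r}ᶜ)
    (ha : Function.Bijective fun s => δ s Letter.a) :
    ∀ ℓ, Function.Injective (fun q => dtil δ q0 r q ℓ) := by
  intro ℓ
  cases ℓ with
  | a => exact ha.1
  | b =>
      intro x y hxy
      simp only [dtil_b] at hxy
      have hmem : ∀ s : Q, s ≠ r → δ s Letter.b ≠ r := by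
        intro s hs
        have := hb.mapsTo (by simpa using hs)
        simpa using this
      by_cases hx : x = q0 <;> by_cases hy : y = q0
      · rw [hx, hy]
      · -- r = δ y b, y ≠ q0
        rw [if_pos hx, if_neg hy] at hxy
        by_cases hyr : y = r
        · exfalso; rw [hyr, hrb] at hxy; exact hrne hxy
        · exact absurd hxy.symm (hmem y hyr)
      · rw [if_neg hx, if_pos hy] at hxy
        by_cases hxr : x = r
        · exfalso; rw [hxr, hrb] at hxy; exact hrne hxy.symm
        · exact absurd hxy (hmem x hxr)
      · rw [if_neg hx, if_neg hy] at hxy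
        by_cases hxr : x = r
        · by_cases hyr : y = r
          · rw [hxr, hyr]
          · exfalso
            rw [hxr, hrb] at hxy
            exact hyr (hruniq y hy hxy.symm)
        · by_cases hyr : y = r
          · exfalso
            rw [hyr, hrb] at hxy
            exact hxr (hruniq x hx hxy)
          · exact hb.injOn (by simpa using hxr) (by simpa using hyr) hxy

variable (k : ℕ) (hk : 0 < k)

theorem tE_inl_a (s : Q) :
    tailExt δ q0 r k hk (Sum.inl s) Letter.a =
      if s = q0 then Sum.inr ⟨k - 1, Nat.sub_lt hk Nat.one_pos⟩
      else Sum.inl (δ s Letter.a) := rfl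

theorem tE_inl_b (s : Q) :
    tailExt δ q0 r k hk (Sum.inl s) Letter.b =
      if s = q0 then Sum.inl r else Sum.inl (δ s Letter.b) := rfl

theorem tE_inr_a (i : Fin k) :
    tailExt δ q0 r k hk (Sum.inr i) Letter.a =
      if (i : ℕ) = 0 then Sum.inr i
      else Sum.inr ⟨(i : ℕ) - 1, Nat.lt_of_le_of_lt (Nat.sub_le _ _) i.isLt⟩ := rfl

theorem tE_inr_b (i : Fin k) :
    tailExt δ q0 r k hk (Sum.inr i) Letter.b =
      if (i : ℕ) = 0 then Sum.inr i else Sum.inl r := rfl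

/-- `t0` is a sink of the tail extension. -/
theorem tE_t0_sink (ℓ : Letter) :
    tailExt δ q0 r k hk (Sum.inr ⟨0, hk⟩) ℓ = Sum.inr ⟨0, hk⟩ := by
  cases ℓ <;> simp [tE_inr_a, tE_inr_b]

theorem dS_t0 (w : List Letter) :
    deltaStar (tailExt δ q0 r k hk) (Sum.inr ⟨0, hk⟩) w = Sum.inr ⟨0, hk⟩ :=
  dS_sink _ (tE_t0_sink k hk) w

/-- The relation between the extension trajectory and the `dtil` trajectory. -/
def RelV' {Q : Type*} (q0 : Q) (k : ℕ) (hk : 0 < k) (s : Q ⊕ Fin k) (q : Q) : Prop :=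
  s = Sum.inr ⟨0, hk⟩ ∨ s = Sum.inl q ∨
    ((∃ j : Fin k, s = Sum.inr j ∧ (j : ℕ) ≠ 0) ∧ q = q0)

theorem relV_step (hsink : ∀ ℓ : Letter, δ q0 ℓ = q0) (s : Q ⊕ Fin k) (q : Q) (ℓ : Letter)
    (h : RelV' q0 k hk s q) :
    RelV' q0 k hk (tailExt δ q0 r k hk s ℓ) (dtil δ q0 r q ℓ) := by
  rcases h with h | h | ⟨⟨j, hj, hj0⟩, hq⟩
  · subst h; rw [tE_t0_sink]; exact Or.inl rfl
  · subst h
    by_cases hq : q = q0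
    · subst hq
      cases ℓ with
      | a =>
          rw [tE_inl_a, if_pos rfl, dtil_a, hsink]
          by_cases hk1 : k - 1 = 0
          · exact Or.inl (by simp [hk1])
          · exact Or.inr (Or.inr ⟨⟨_, rfl, hk1⟩, rfl⟩)
      | b =>
          rw [tE_inl_b, if_pos rfl, dtil_b, if_pos rfl]
          exact Or.inr (Or.inl rfl)
    · cases ℓ with
      | a => rw [tE_inl_a, if_neg hq, dtil_a]; exact Or.inr (Or.inl rfl)
      | b => rw [tE_inl_b, if_neg hq, dtil_b, if_neg hq]; exact Or.inr (Or.inl rfl)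
  · subst hj; subst hq
    cases ℓ with
    | a =>
        rw [tE_inr_a, if_neg hj0, dtil_a, hsink]
        by_cases hj1 : (j : ℕ) - 1 = 0
        · exact Or.inl (by simp [hj1])
        · exact Or.inr (Or.inr ⟨⟨_, rfl, hj1⟩, rfl⟩)
    | b =>
        rw [tE_inr_b, if_neg hj0, dtil_b, if_pos rfl]
        exact Or.inr (Or.inl rfl)

theorem relV_star (hsink : ∀ ℓ : Letter, δ q0 ℓ = q0) (w : List Letter) :
    ∀ (s : Q ⊕ Fin k) (q : Q), RelV' q0 k hk s q →
      RelV' q0 k hk (deltaStar (tailExt δ q0 r k hk) s w) (deltaStar (dtil δ q0 r) q w) := by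
  induction w with
  | nil => exact fun s q h => h
  | cons ℓ w ih =>
      intro s q h
      rw [dS_cons, dS_cons]
      exact ih _ _ (relV_step k hk  hsink s q ℓ h)

/-- Relation between original `δ`-trajectory and `dtil`-trajectory. -/
theorem rel2_star (hsink : ∀ ℓ : Letter, δ q0 ℓ = q0) (w : List Letter) :
    ∀ (g q : Q), (g = q ∨ g = q0) →
      (deltaStar δ g w = deltaStar (dtil δ q0 r) q w ∨ deltaStar δ g w = q0) := by
  induction w with
  | nil => exact fun g q h => h
  | cons ℓ w ih =>
      intro g q h
      rw [dS_cons, dS_cons]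
      rcases h with h | h
      · subst h
        by_cases hq : g = q0
        · subst hq
          cases ℓ with
          | a => exact ih _ _ (Or.inr (hsink Letter.a))
          | b => exact ih _ _ (Or.inr (hsink Letter.b))
        · cases ℓ with
          | a => exact ih _ _ (Or.inl rfl)
          | b => rw [dtil_b, if_neg hq]; exact ih _ _ (Or.inl rfl)
      · subst h
        exact ih _ _ (Or.inr (hsink ℓ))

/-- Running `j` letters `a` from tail state `i` reaches `i - j` (truncated). -/
theorem tailRun (j : ℕ) : ∀ i : Fin k,
    deltaStar (tailExt δ q0 r k hk) (Sum.inr i) (List.replicate j Letter.a) =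
      Sum.inr ⟨(i : ℕ) - j, Nat.lt_of_le_of_lt (Nat.sub_le _ _) i.isLt⟩ := by
  induction j with
  | zero => intro i; simp [deltaStar]
  | succ j ih =>
      intro i
      rw [List.replicate_succ, dS_cons, tE_inr_a]
      by_cases h0 : (i : ℕ) = 0
      · rw [if_pos h0, ih]
        congr 1
        exact Fin.ext (by simp only [Fin.val_mk]; omega)
      · rw [if_neg h0, ih]
        congr 1
        exact Fin.ext (by simp only [Fin.val_mk]; omega)

theorem reset_to_q0 (hsink : ∀ ℓ : Letter, δ q0 ℓ = q0) {w : List Letter}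
    (hw : IsResetWord δ w) (q : Q) : deltaStar δ q w = q0 := by
  rw [hw q q0]; exact dS_sink δ hsink w

theorem lift_to_q0 : ∀ (w : List Letter) (p : Q), deltaStar δ p w = q0 →
    ∃ v, deltaStar (tailExt δ q0 r k hk) (Sum.inl p) v = Sum.inl q0 := by
  intro w
  induction w with
  | nil => intro p hp; exact ⟨[], congrArg Sum.inl hp⟩
  | cons ℓ w ih =>
      intro p hp
      by_cases hpq : p = q0
      · exact ⟨[], congrArg Sum.inl hpq⟩
      · rw [dS_cons] at hp
        obtain ⟨v, hv⟩ := ih (δ p ℓ) hp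
        refine ⟨ℓ :: v, ?_⟩
        rw [dS_cons]
        have : tailExt δ q0 r k hk (Sum.inl p) ℓ = Sum.inl (δ p ℓ) := by
          cases ℓ with
          | a => rw [tE_inl_a, if_neg hpq]
          | b => rw [tE_inl_b, if_neg hpq]
        rw [this]; exact hv

theorem kill_q0 :
    deltaStar (tailExt δ q0 r k hk) (Sum.inl q0) (List.replicate k Letter.a) =
      Sum.inr ⟨0, hk⟩ := by
  obtain ⟨j, rfl⟩ : ∃ j, k = j + 1 := ⟨k - 1, (Nat.succ_pred_eq_of_pos hk).symm⟩
  rw [List.replicate_succ, dS_cons, tE_inl_a, if_pos rfl, tailRun]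
  congr 1
  exact Fin.ext (by simp only [Fin.val_mk]; omega)

theorem shape_after_b (y : Q ⊕ Fin k) :
    tailExt δ q0 r k hk y Letter.b = Sum.inr ⟨0, hk⟩ ∨
      ∃ p : Q, tailExt δ q0 r k hk y Letter.b = Sum.inl p := by
  cases y with
  | inl s =>
      rw [tE_inl_b]
      by_cases hs : s = q0
      · exact Or.inr ⟨r, if_pos hs⟩
      · exact Or.inr ⟨δ s Letter.b, if_neg hs⟩
  | inr i =>
      rw [tE_inr_b]
      by_cases hi : (i : ℕ) = 0
      · rw [if_pos hi]
        exact Or.inl (by congr 1; exact Fin.ext (by simpa using hi))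
      · rw [if_neg hi]
        exact Or.inr ⟨r, rfl⟩

theorem killAll (hsink : ∀ ℓ : Letter, δ q0 ℓ = q0) (hsync : ∃ w : List Letter, IsResetWord δ w)
    (m : ℕ) : ∀ S : Finset (Q ⊕ Fin k),
    (∀ x ∈ S, x = Sum.inr ⟨0, hk⟩ ∨ ∃ p, x = Sum.inl p) →
    (S.erase (Sum.inr ⟨0, hk⟩)).card ≤ m →
    ∃ u, ∀ x ∈ S, deltaStar (tailExt δ q0 r k hk) x u = Sum.inr ⟨0, hk⟩ := by
  induction m with
  | zero =>
      intro S hshape hcard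
      refine ⟨[], fun x hx => ?_⟩
      rcases hshape x hx with h | ⟨p, rfl⟩
      · rw [dS_nil, h]
      · exfalso
        have : Sum.inl p ∈ S.erase (Sum.inr ⟨0, hk⟩) :=
          Finset.mem_erase.2 ⟨by simp, hx⟩
        have := Finset.card_pos.2 ⟨_, this⟩
        omega
  | succ m ih =>
      intro S hshape hcard
      set t0 : Q ⊕ Fin k := Sum.inr ⟨0, hk⟩ with ht0
      by_cases hE : S.erase t0 = ∅
      · refine ⟨[], fun x hx => ?_⟩
        rcases hshape x hx with h | ⟨p, rfl⟩
        · rw [dS_nil, h]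
        · exfalso
          have : Sum.inl p ∈ S.erase t0 := Finset.mem_erase.2 ⟨by simp [ht0], hx⟩
          rw [hE] at this; exact absurd this (Finset.notMem_empty _)
      · obtain ⟨x₀, hx₀⟩ := Finset.nonempty_iff_ne_empty.2 hE
        have hx₀S : x₀ ∈ S := Finset.mem_of_mem_erase hx₀
        have hx₀ne : x₀ ≠ t0 := (Finset.mem_erase.1 hx₀).1
        obtain ⟨p, rfl⟩ : ∃ p, x₀ = Sum.inl p := by
          rcases hshape x₀ hx₀S with h | h
          · exact absurd h hx₀ne
          · exact h
        obtain ⟨w₀, hw₀⟩ := hsync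
        obtain ⟨v, hv⟩ := lift_to_q0 k hk w₀ p (reset_to_q0 hsink hw₀ p)
        set u₀ : List Letter := v ++ (List.replicate k Letter.a ++ [Letter.b]) with hu₀
        set f : Q ⊕ Fin k → Q ⊕ Fin k :=
          fun x => deltaStar (tailExt δ q0 r k hk) x u₀ with hf
        have hfp : f (Sum.inl p) = t0 := by
          rw [hf]
          simp only [hu₀]
          rw [dS_append, hv, dS_append, kill_q0]
          show tailExt δ q0 r k hk (Sum.inr ⟨0, hk⟩) Letter.b = t0
          rw [tE_t0_sink]
        have hshape' : ∀ x, f x = t0 ∨ ∃ p', f x = Sum.inl p' := by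
          intro x
          rw [hf]
          simp only [hu₀]
          rw [show v ++ (List.replicate k Letter.a ++ [Letter.b]) =
              (v ++ List.replicate k Letter.a) ++ [Letter.b] by rw [List.append_assoc],
            dS_append]
          show _ = t0 ∨ _
          have := shape_after_b (δ := δ) (q0 := q0) (r := r) k hk
            (deltaStar (tailExt δ q0 r k hk) x (v ++ List.replicate k Letter.a))
          rw [dS_cons, dS_nil]
          exact this
        set S' : Finset (Q ⊕ Fin k) := S.image f with hS'
        have hsub : S'.erase t0 ⊆ ((S.erase t0).image f).erase t0 := by
          intro z hz
          obtain ⟨hzne, hz⟩ := Finset.mem_erase.1 hz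
          obtain ⟨x, hxS, hxz⟩ := Finset.mem_image.1 hz
          refine Finset.mem_erase.2 ⟨hzne, Finset.mem_image.2 ⟨x, ?_, hxz⟩⟩
          refine Finset.mem_erase.2 ⟨?_, hxS⟩
          rintro rfl
          exact hzne (by rw [← hxz, hf]; exact dS_t0 k hk u₀)
        have ht0mem : t0 ∈ (S.erase t0).image f :=
          Finset.mem_image.2 ⟨Sum.inl p, hx₀, hfp⟩
        have hcard' : (S'.erase t0).card ≤ m := by
          have h1 := Finset.card_le_card hsub
          have h2 : (((S.erase t0).image f).erase t0).card =
              ((S.erase t0).image f).card - 1 := Finset.card_erase_of_mem ht0mem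
          have h3 := Finset.card_image_le (s := S.erase t0) (f := f)
          omega
        have hshapeS' : ∀ x ∈ S', x = t0 ∨ ∃ p', x = Sum.inl p' := by
          intro x hx
          obtain ⟨y, _, rfl⟩ := Finset.mem_image.1 hx
          exact hshape' y
        obtain ⟨u', hu'⟩ := ih S' hshapeS' hcard'
        refine ⟨u₀ ++ u', fun x hx => ?_⟩
        rw [dS_append]
        exact hu' (f x) (Finset.mem_image_of_mem f hx)

theorem reset_exists [Fintype Q] (hsink : ∀ ℓ : Letter, δ q0 ℓ = q0)
    (hsync : ∃ w : List Letter, IsResetWord δ w) :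
    ∃ W : List Letter, IsResetWord (tailExt δ q0 r k hk) W := by
  set t0 : Q ⊕ Fin k := Sum.inr ⟨0, hk⟩ with ht0
  set S : Finset (Q ⊕ Fin k) :=
    Finset.univ.image (fun x => tailExt δ q0 r k hk x Letter.b) with hS
  have hshape : ∀ x ∈ S, x = t0 ∨ ∃ p, x = Sum.inl p := by
    intro x hx
    obtain ⟨y, _, rfl⟩ := Finset.mem_image.1 hx
    exact shape_after_b k hk y
  obtain ⟨u, hu⟩ := killAll k hk hsink hsync (S.erase t0).card S hshape le_rfl
  refine ⟨Letter.b :: u, fun x y => ?_⟩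
  have hx : deltaStar (tailExt δ q0 r k hk) x (Letter.b :: u) = t0 := by
    rw [dS_cons]
    exact hu _ (Finset.mem_image_of_mem _ (Finset.mem_univ x))
  have hy : deltaStar (tailExt δ q0 r k hk) y (Letter.b :: u) = t0 := by
    rw [dS_cons]
    exact hu _ (Finset.mem_image_of_mem _ (Finset.mem_univ y))
  rw [hx, hy]

theorem extract (hsink : ∀ ℓ : Letter, δ q0 ℓ = q0) {w : List Letter}
    (hw : ∀ x : Q ⊕ Fin k, deltaStar (tailExt δ q0 r k hk) x w = Sum.inr ⟨0, hk⟩)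
    (p : Q) :
    ∃ s : ℕ, s + k ≤ w.length ∧
      (∀ i < k, w[s + i]? = some Letter.a) ∧
      deltaStar (dtil δ q0 r) p (w.take s) = q0 := by
  set L := w.length with hL
  set traj : ℕ → Q ⊕ Fin k :=
    fun i => deltaStar (tailExt δ q0 r k hk) (Sum.inl p) (w.take i) with htraj
  have hstep : ∀ i, (h : i < L) → traj (i + 1) = tailExt δ q0 r k hk (traj i) (w[i]'h) := by
    intro i h
    rw [htraj]
    simp only
    rw [List.take_succ, List.getElem?_eq_getElem h]
    rw [dS_append]
    rfl
  have htrajL : traj L = Sum.inr ⟨0, hk⟩ := by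
    rw [htraj]; simp only [hL, List.take_length]; exact hw (Sum.inl p)
  set F : Finset ℕ := (Finset.range (L + 1)).filter (fun i => (traj i).isLeft) with hF
  have h0F : 0 ∈ F := by
    rw [hF, Finset.mem_filter, Finset.mem_range]
    exact ⟨by omega, by rw [htraj]; simp [deltaStar]⟩
  have hFne : F.Nonempty := ⟨0, h0F⟩
  set s := F.max' hFne with hs
  have hsF : s ∈ F := F.max'_mem hFne
  have hsL : s ≤ L := by
    have := (Finset.mem_filter.1 hsF).1
    rw [Finset.mem_range] at this; omega
  have hsleft : (traj s).isLeft := (Finset.mem_filter.1 hsF).2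
  have hnotleft : ∀ i, i ≤ L → s < i → ¬ (traj i).isLeft := by
    intro i hiL hsi hleft
    have : i ∈ F := by
      rw [hF, Finset.mem_filter, Finset.mem_range]; exact ⟨by omega, hleft⟩
    have := F.le_max' i this
    omega
  have hsltL : s < L := by
    rcases Nat.lt_or_ge s L with h | h
    · exact h
    · exfalso
      have : s = L := by omega
      rw [this, htrajL] at hsleft
      simp at hsleft
  -- the state at time s is inl q0 and the letter is a
  obtain ⟨x, hx⟩ : ∃ x, traj s = Sum.inl x := by
    rcases h : traj s with x | i
    · exact ⟨x, rfl⟩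
    · rw [h] at hsleft; simp at hsleft
  have hnext := hstep s hsltL
  have hnextnot : ¬ (traj (s + 1)).isLeft := hnotleft (s + 1) (by omega) (by omega)
  have hxq0 : x = q0 ∧ w[s]'hsltL = Letter.a := by
    rcases hℓ : w[s]'hsltL with _ | _
    · by_cases hxq : x = q0
      · exact ⟨hxq, rfl⟩
      · exfalso
        rw [hℓ, hx, tE_inl_a, if_neg hxq] at hnext
        rw [hnext] at hnextnot; simp at hnextnot
    · exfalso
      rw [hℓ, hx, tE_inl_b] at hnext
      by_cases hxq : x = q0
      · rw [if_pos hxq] at hnext; rw [hnext] at hnextnot; simp at hnextnot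
      · rw [if_neg hxq] at hnext; rw [hnext] at hnextnot; simp at hnextnot
  have hxq0' : x = q0 := hxq0.1
  have hwa : w[s]'hsltL = Letter.a := hxq0.2
  have htraj1 : traj (s + 1) = Sum.inr ⟨k - 1, Nat.sub_lt hk Nat.one_pos⟩ := by
    rw [hnext, hwa, hx, hxq0', tE_inl_a, if_pos rfl]
  -- inductive claim along the tail
  have claim : ∀ j, j ≤ k - 1 →
      (s + 1 + j ≤ L ∧
       traj (s + 1 + j) = Sum.inr ⟨k - 1 - j, by omega⟩ ∧
       (∀ i ≤ j, w[s + i]? = some Letter.a)) := by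
    intro j
    induction j with
    | zero =>
        intro _
        refine ⟨by omega, by simpa using htraj1, ?_⟩
        intro i hi
        interval_cases i
        rw [List.getElem?_eq_getElem (by omega : s + 0 < w.length)]
        have : s + 0 = s := by omega
        simp only [this]
        rw [hwa]
    | succ j ihj =>
        intro hj1
        obtain ⟨htL, htj, hlet⟩ := ihj (by omega)
        set t := s + 1 + j with ht
        have hkj : k - 1 - j ≠ 0 := by omega
        have htne : t ≠ L := by
          intro hEq
          rw [hEq, htrajL] at htj
          have h2 := congrArg Fin.val (Sum.inr.inj htj)
          simp only [Fin.val_mk] at h2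
          omega
        have htltL : t < L := by omega
        have hnext' := hstep t htltL
        have hta : w[t]'htltL = Letter.a := by
          rcases hℓ : w[t]'htltL with _ | _
          · rfl
          · exfalso
            rw [hℓ, htj, tE_inr_b, if_neg hkj] at hnext'
            exact hnotleft (t + 1) (by omega) (by omega) (by rw [hnext']; simp)
        refine ⟨by omega, ?_, ?_⟩
        · rw [show s + 1 + (j + 1) = t + 1 by omega, hnext', hta, htj, tE_inr_a, if_neg hkj]
          congr 1
        · intro i hi
          rcases Nat.lt_or_ge i (j + 1) with h | h
          · exact hlet i (by omega)
          · have : i = j + 1 := by omega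
            subst this
            rw [show s + (j + 1) = t by omega,
              List.getElem?_eq_getElem htltL, hta]

  obtain ⟨hkL, _, hlet⟩ := claim (k - 1) le_rfl
  have hx' : deltaStar (tailExt δ q0 r k hk) (Sum.inl p) (w.take s) = Sum.inl q0 := by
    have h := hx
    rw [hxq0'] at h
    exact h
  have hrel := relV_star (r := r) k hk hsink (w.take s) (Sum.inl p) p (Or.inr (Or.inl rfl))
  rw [hx'] at hrel
  have hβ : deltaStar (dtil δ q0 r) p (w.take s) = q0 := by
    rcases hrel with h | h | ⟨⟨j, hj, _⟩, hq⟩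
    · exact absurd h (by simp)
    · exact (Sum.inl.inj h).symm
    · exact absurd hj (by simp)
  refine ⟨s, by omega, ?_, hβ⟩
  intro i hi
  exact hlet i (by omega)
end Main

theorem drop_take_replicate (u : List Letter) (s d : ℕ) (hd : s + d ≤ u.length)
    (h : ∀ i < d, u[s + i]? = some Letter.a) :
    (u.drop s).take d = List.replicate d Letter.a := by
  refine List.eq_replicate_iff.2 ⟨?_, ?_⟩
  · rw [List.length_take, List.length_drop]; omega
  · intro c hc
    obtain ⟨i, hi, hci⟩ := List.mem_iff_getElem.1 hc
    have hilen : i < d := by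
      rw [List.length_take, List.length_drop] at hi; omega
    have h1 : ((u.drop s).take d)[i] = (u.drop s)[i]'(by rw [List.length_drop]; omega) :=
      List.getElem_take ..
    have h2 : (u.drop s)[i]'(by rw [List.length_drop]; omega) = u[s + i]'(by omega) :=
      List.getElem_drop ..
    have h3 : u[s + i]? = some (u[s + i]'(by omega)) :=
      List.getElem?_eq_getElem (by omega)
    have := h i hilen
    rw [h3] at this
    rw [← hci, h1, h2]
    exact Option.some.inj this

theorem delete_blocks {Q : Type*} (δ : Q → Letter → Q) (k : ℕ) (hk : 0 < k)
    (hid : ∀ q, deltaStar δ q (List.replicate k Letter.a) = q) (P : Finset ℕ) :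
    ∀ u : List Letter,
    (∀ x ∈ P, x + k ≤ u.length) →
    (∀ x ∈ P, ∀ i < k, u[x + i]? = some Letter.a) →
    (∀ x ∈ P, ∀ y ∈ P, x ≠ y → x + k ≤ y ∨ y + k ≤ x) →
    ∃ u' : List Letter, u'.length + P.card * k = u.length ∧
      ∀ q, deltaStar δ q u' = deltaStar δ q u := by
  induction P using Finset.strongInduction with
  | _ P ih =>
    intro u h1 h2 h3
    by_cases hP : P = ∅
    · exact ⟨u, by simp [hP], fun q => rfl⟩
    · obtain hPne := Finset.nonempty_iff_ne_empty.2 hP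
      set x := P.max' hPne with hx
      have hxP : x ∈ P := P.max'_mem hPne
      have hxlen : x + k ≤ u.length := h1 x hxP
      set v : List Letter := u.take x ++ u.drop (x + k) with hv
      have hblock : (u.drop x).take k = List.replicate k Letter.a :=
        drop_take_replicate u x k hxlen (h2 x hxP)
      have hvlen : v.length = u.length - k := by
        rw [hv, List.length_append, List.length_take, List.length_drop]; omega
      have hact : ∀ q, deltaStar δ q v = deltaStar δ q u := by
        intro q
        conv_rhs => rw [← List.take_append_drop x u]
        rw [← List.take_append_drop k (u.drop x), hblock, List.drop_drop]
        rw [hv, dS_append, dS_append, dS_append, hid]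
      have hsubP : P.erase x ⊂ P := Finset.erase_ssubset hxP
      have hylex : ∀ y ∈ P.erase x, y + k ≤ x := by
        intro y hy
        obtain ⟨hyne, hyP⟩ := Finset.mem_erase.1 hy
        have hyx : y ≤ x := P.le_max' y hyP
        rcases h3 y hyP x hxP hyne with h | h
        · exact h
        · omega
      obtain ⟨u', hu'len, hu'act⟩ := ih (P.erase x) hsubP v
        (by
          intro y hy
          have := hylex y hy
          omega)
        (by
          intro y hy i hi
          have hyk := hylex y hy
          have hlt : y + i < x := by omega
          rw [hv, List.getElem?_append, List.length_take]
          rw [if_pos (by omega : y + i < min x u.length)]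
          rw [List.getElem?_take, if_pos hlt]
          exact h2 y (Finset.mem_of_mem_erase hy) i hi)
        (by
          intro a ha b hb hab
          exact h3 a (Finset.mem_of_mem_erase ha) b (Finset.mem_of_mem_erase hb) hab)
      refine ⟨u', ?_, fun q => (hu'act q).trans (hact q)⟩
      have hcard : P.card = (P.erase x).card + 1 := (Finset.card_erase_add_one hxP).symm
      rw [hcard]
      have : u'.length + (P.erase x).card * k = v.length := hu'len
      have : ((P.erase x).card + 1) * k = (P.erase x).card * k + k := by ring
      omega

end Vorel

/-- Lower bound in Vorel's lemma: every reset word of the tail extension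
`𝒜(k,r)` has length at least `rt(𝒜) + n·k`; that is,
`rt(𝒜(k,r)) ≥ rt(𝒜) + n·k`. -/
theorem resetThreshold_tailExt_ge
    {Q : Type*} [Fintype Q] [DecidableEq Q]
    (δ : Q → Letter → Q) (q0 r : Q) (n : ℕ)
    -- `𝒜` has `n` states
    (hn : Fintype.card Q = n)
    -- `q0` is a sink state
    (hsink : ∀ ℓ : Letter, δ q0 ℓ = q0)
    -- `𝒜` is synchronizing
    (hsync : ∃ w : List Letter, IsResetWord δ w)
    -- `r` is the unique state of `Q \ {q0}` with `δ(r, b) = q0` (the pre-sink state)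
    (hrne : r ≠ q0)
    (hrb : δ r Letter.b = q0)
    (hruniq : ∀ s : Q, s ≠ q0 → δ s Letter.b = q0 → s = r)
    -- the letter `b` acts as a permutation on `Q \ {r}`
    (hb : Set.BijOn (fun s => δ s Letter.b) {r}ᶜ {r}ᶜ)
    -- the letter `a` acts as a permutation on `Q`
    (ha : Function.Bijective fun s => δ s Letter.a)
    -- `ord` is the order of the letter `a`: the least `j ≥ 1` such that `a^j` acts as the identity
    (ord : ℕ) (hord : 0 < ord)
    (hordid : ∀ q : Q, deltaStar δ q (List.replicate ord Letter.a) = q)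
    (hordleast : ∀ j : ℕ, 0 < j →
      (∀ q : Q, deltaStar δ q (List.replicate j Letter.a) = q) → ord ≤ j)
    -- `k` is a positive multiple of the order of `a`
    (k m : ℕ) (hm : 0 < m) (hkm : k = m * ord) (hk : 0 < k) :
    (∀ w : List Letter, IsResetWord (tailExt δ q0 r k hk) w →
        resetThreshold δ + n * k ≤ w.length) ∧
      resetThreshold δ + n * k ≤ resetThreshold (tailExt δ q0 r k hk) := by
  have hid : ∀ q : Q, deltaStar δ q (List.replicate k Letter.a) = q := by
    intro q; rw [hkm]; exact Vorel.dS_replicate_mul δ hordid m q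
  have hdtinj := Vorel.dtil_inj hsink hrne hrb hruniq hb ha
  have main : ∀ w : List Letter, IsResetWord (tailExt δ q0 r k hk) w →
      resetThreshold δ + n * k ≤ w.length := by
    intro w hw
    have h_to_t0 : ∀ x : Q ⊕ Fin k,
        deltaStar (tailExt δ q0 r k hk) x w = Sum.inr ⟨0, hk⟩ := by
      intro x
      rw [hw x (Sum.inr ⟨0, hk⟩)]
      exact Vorel.dS_t0 k hk w
    choose s hs1 hs2 hs3 using fun p => Vorel.extract k hk hsink h_to_t0 p
    have hq0fix : Vorel.dtil δ q0 r q0 Letter.a = q0 := hsink Letter.a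
    have hsep : ∀ p p' : Q, p ≠ p' → s p + k ≤ s p' ∨ s p' + k ≤ s p := by
      have key : ∀ p p' : Q, s p ≤ s p' → s p' < s p + k → p = p' := by
        intro p p' hle hlt
        have hd : s p + (s p' - s p) = s p' := by omega
        have hrep : (w.drop (s p)).take (s p' - s p) =
            List.replicate (s p' - s p) Letter.a := by
          refine Vorel.drop_take_replicate w (s p) (s p' - s p)
            (by have := hs1 p'; omega) ?_
          intro i hi
          exact hs2 p i (by omega)
        have htake : w.take (s p') = w.take (s p) ++ List.replicate (s p' - s p) Letter.a := by
          rw [← hd, List.take_add, hrep, Nat.add_sub_cancel_left]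
        have h1 : deltaStar (Vorel.dtil δ q0 r) p (w.take (s p')) = q0 := by
          rw [htake, Vorel.dS_append, hs3 p]
          exact Vorel.dS_replicate_fixed _ hq0fix _
        have h2 := hs3 p'
        exact Vorel.dS_inj _ hdtinj (w.take (s p')) (h1.trans h2.symm)
      intro p p' hne
      rcases le_total (s p) (s p') with h | h
      · rcases Nat.lt_or_ge (s p') (s p + k) with h2 | h2
        · exact absurd (key p p' h h2) hne
        · exact Or.inl h2
      · rcases Nat.lt_or_ge (s p) (s p' + k) with h2 | h2
        · exact absurd (key p' p h h2).symm hne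
        · exact Or.inr h2
    have hsinj : Function.Injective s := by
      intro p p' hpp
      by_contra hne
      rcases hsep p p' hne with h | h <;> omega
    set P : Finset ℕ := Finset.univ.image s with hP
    have hPcard : P.card = n := by
      rw [hP, Finset.card_image_of_injective _ hsinj, Finset.card_univ, hn]
    obtain ⟨u', hu'len, hu'act⟩ := Vorel.delete_blocks δ k hk hid P w
      (by rintro x hx
          obtain ⟨p, _, rfl⟩ := Finset.mem_image.1 hx
          exact hs1 p)
      (by rintro x hx i hi
          obtain ⟨p, _, rfl⟩ := Finset.mem_image.1 hx
          exact hs2 p i hi)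
      (by rintro x hx y hy hxy
          obtain ⟨p, _, rfl⟩ := Finset.mem_image.1 hx
          obtain ⟨p', _, rfl⟩ := Finset.mem_image.1 hy
          exact hsep p p' (fun h => hxy (by rw [h])))
    have hwreset : ∀ p : Q, deltaStar δ p w = q0 := by
      intro p
      have hrel := Vorel.rel2_star (r := r) hsink (w.take (s p)) p p (Or.inl rfl)
      have hq : deltaStar δ p (w.take (s p)) = q0 := by
        rcases hrel with h | h
        · rw [h, hs3 p]
        · exact h
      conv_lhs => rw [← List.take_append_drop (s p) w]
      rw [Vorel.dS_append, hq]
      exact Vorel.dS_sink δ hsink _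
    have hreset' : IsResetWord δ u' := by
      intro p q
      rw [hu'act p, hu'act q, hwreset p, hwreset q]
    have hrt : resetThreshold δ ≤ u'.length :=
      Nat.sInf_le ⟨u', hreset', rfl⟩
    have hlen : u'.length + n * k = w.length := by rw [← hPcard]; exact hu'len
    omega
  refine ⟨main, ?_⟩
  obtain ⟨W, hW⟩ := Vorel.reset_exists (r := r) k hk hsink hsync
  have hne : {l : ℕ | ∃ w : List Letter,
      IsResetWord (tailExt δ q0 r k hk) w ∧ w.length = l}.Nonempty :=
    ⟨W.length, W, hW, rfl⟩
  obtain ⟨w₀, hw₀, hlen⟩ := Nat.sInf_mem hne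
  have h := main w₀ hw₀
  rw [hlen] at h
  exact h
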